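/- In B_n one has r_n r_{n−1} ⋯ r_2 r_1 = d^2, and more generally every cyclic rotation of this product equals d^2: for each k with 1 ≤ k ≤ n, r_k r_{k−1} ⋯ r_1 · r_n r_{n−1} ⋯ r_{k+1} = d^2. -/

import Mathlib

namespace Braid

/-- Braid relations on generators indexed by `Fin m`; the generator `i : Fin m` stands for the
Artin generator `σ_{i+1}` of the braid group on `m+1` strands: the relations are
`σ_i σ_j = σ_j σ_i` for `|i-j| ≥ 2` and `σ_i σ_{i+1} σ_i = σ_{i+1} σ_i σ_{i+1}`. -/
def braidRels (m : ℕ) : Set (FreeGroup (Fin m)) :=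
  {r | ∃ i j : Fin m, i.val + 2 ≤ j.val ∧
      r = .of i * .of j * (.of j * .of i)⁻¹} ∪
  {r | ∃ (i : Fin m) (hij : i.val + 1 < m),
      r = .of i * .of ⟨i.val + 1, hij⟩ * .of i *
        (.of ⟨i.val + 1, hij⟩ * .of i * .of ⟨i.val + 1, hij⟩)⁻¹}

/-- The Artin braid group `B_n` on `n` strands, presented with generators `σ_1, …, σ_{n-1}`
and the braid relations. -/
def BraidGroup (n : ℕ) : Type := PresentedGroup (braidRels (n - 1))

instance (n : ℕ) : Group (BraidGroup n) := by unfold BraidGroup; infer_instance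

/-- The Artin generator `σ_i` of `B_n`, for `1 ≤ i ≤ n-1` (junk value `1` otherwise). -/
def σ (n : ℕ) (i : ℕ) : BraidGroup n :=
  if h : 1 ≤ i ∧ i ≤ n - 1 then PresentedGroup.of ⟨i - 1, by omega⟩ else 1

/-- The ascending product `σ_a σ_{a+1} ⋯ σ_b` (empty product if `b < a`). -/
def up (n a b : ℕ) : BraidGroup n := ((List.range' a (b + 1 - a)).map (σ n)).prod

/-- The descending product `σ_a σ_{a-1} ⋯ σ_b` (empty product if `a < b`). -/
def down (n a b : ℕ) : BraidGroup n :=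
  ((List.range' b (a + 1 - b)).reverse.map (σ n)).prod

/-- The full twist `d = (σ_{n-1} ⋯ σ_2 σ_1)^n` of `B_n`. -/
def fullTwist (n : ℕ) : BraidGroup n := (down n (n - 1) 1) ^ n

/-- The flip `r_i = σ_{i-1} ⋯ σ_2 σ_1^2 σ_2 ⋯ σ_{n-2} σ_{n-1}^2 σ_{n-2} ⋯ σ_i` of `B_n`
(for `1 ≤ i ≤ n`), written as `(σ_{i-1} ⋯ σ_1) (σ_1 ⋯ σ_{n-1}) (σ_{n-1} ⋯ σ_i)`. -/
def flip (n i : ℕ) : BraidGroup n :=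
  down n (i - 1) 1 * up n 1 (n - 1) * down n (n - 1) i

/-- The descending product of flips `r_a r_{a-1} ⋯ r_b` (empty product if `a < b`). -/
def flipsDown (n a b : ℕ) : BraidGroup n :=
  ((List.range' b (a + 1 - b)).reverse.map (flip n)).prod

/-- The subgroup `R_n ⊆ B_n` generated by the full twist `d` and the flips `r_1, …, r_n`. -/
def R (n : ℕ) : Subgroup (BraidGroup n) :=
  Subgroup.closure ({fullTwist n} ∪ flip n '' Set.Icc 1 n)

/-- The subgroup `R_n' ⊆ B_n` generated by the flips `r_1, …, r_n`. -/
def R' (n : ℕ) : Subgroup (BraidGroup n) :=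
  Subgroup.closure (flip n '' Set.Icc 1 n)

private lemma swap_braid {n : ℕ} (a b c : Fin n) (hab : a ≠ b) (hbc : b ≠ c) (hac : a ≠ c) :
    Equiv.swap a b * Equiv.swap b c * Equiv.swap a b
      = Equiv.swap b c * Equiv.swap a b * Equiv.swap b c := by
  have h1 : Equiv.swap b a * Equiv.swap c b * Equiv.swap b a = Equiv.swap a c :=
    Equiv.swap_mul_swap_mul_swap (Ne.symm hbc) hac.symm
  have h2 : Equiv.swap b c * Equiv.swap a b * Equiv.swap b c = Equiv.swap c a :=
    Equiv.swap_mul_swap_mul_swap hab hac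
  rw [h2, Equiv.swap_comm a b, Equiv.swap_comm b c, h1, Equiv.swap_comm a c]

private lemma swap_commute {n : ℕ} (a b c d : Fin n)
    (hac : a ≠ c) (had : a ≠ d) (hbc : b ≠ c) (hbd : b ≠ d) :
    Equiv.swap a b * Equiv.swap c d = Equiv.swap c d * Equiv.swap a b := by
  refine Equiv.Perm.Disjoint.commute ?_
  intro x
  by_cases h1 : x = a
  · subst h1; right; exact Equiv.swap_apply_of_ne_of_ne hac had
  · by_cases h2 : x = b
    · subst h2; right; exact Equiv.swap_apply_of_ne_of_ne hbc hbd
    · left; exact Equiv.swap_apply_of_ne_of_ne h1 h2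

/-- The transposition `(i, i+1)` of `Fin n` associated to the generator `i : Fin (n-1)`. -/
def permGen (n : ℕ) (i : Fin (n - 1)) : Equiv.Perm (Fin n) :=
  Equiv.swap ⟨i.val, by have := i.isLt; omega⟩ ⟨i.val + 1, by have := i.isLt; omega⟩

/-- The homomorphism `B_n → Sym(n)` sending `σ_i` to the transposition `(i, i+1)`. -/
def toPerm (n : ℕ) : BraidGroup n →* Equiv.Perm (Fin n) :=
  PresentedGroup.toGroup (f := permGen n)
    (by
      rintro r (⟨i, j, hij, rfl⟩ | ⟨i, hij, rfl⟩) <;>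
        simp only [map_mul, map_inv, FreeGroup.lift_apply_of, permGen] <;> rw [mul_inv_eq_one]
      · refine swap_commute _ _ _ _ ?_ ?_ ?_ ?_ <;>
          · rw [ne_eq, Fin.mk.injEq]; omega
      · refine swap_braid _ _ _ ?_ ?_ ?_ <;>
          · rw [ne_eq, Fin.mk.injEq]; omega)

/-- The pure braid group `P_n`: the kernel of `B_n → Sym(n)`, `σ_i ↦ (i, i+1)`. -/
def P (n : ℕ) : Subgroup (BraidGroup n) := (toPerm n).ker

private lemma mk_rel_eq_one {m : ℕ} {r : FreeGroup (Fin m)} (h : r ∈ braidRels m) :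
    PresentedGroup.mk (braidRels m) r = 1 :=
  (QuotientGroup.eq_one_iff _).mpr (Subgroup.subset_normalClosure h)

lemma σ_comm {n i j : ℕ} (h1 : 1 ≤ i) (h2 : i + 2 ≤ j) (h3 : j ≤ n - 1) :
    σ n i * σ n j = σ n j * σ n i := by
  rw [show σ n i = PresentedGroup.of (⟨i - 1, by omega⟩ : Fin (n - 1)) from
      dif_pos ⟨h1, by omega⟩,
    show σ n j = PresentedGroup.of (⟨j - 1, by omega⟩ : Fin (n - 1)) from
      dif_pos ⟨by omega, h3⟩]
  have hmem : (FreeGroup.of (⟨i - 1, by omega⟩ : Fin (n-1)) * .of ⟨j - 1, by omega⟩ *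
      (.of ⟨j - 1, by omega⟩ * .of ⟨i - 1, by omega⟩)⁻¹) ∈ braidRels (n - 1) :=
    Or.inl ⟨⟨i - 1, by omega⟩, ⟨j - 1, by omega⟩, by show i - 1 + 2 ≤ j - 1; omega, rfl⟩
  have h := mk_rel_eq_one hmem
  rw [map_mul, map_inv, mul_inv_eq_one, map_mul, map_mul] at h
  exact h

set_option maxHeartbeats 1600000 in
lemma σ_braid {n i : ℕ} (h1 : 1 ≤ i) (h2 : i + 1 ≤ n - 1) :
    σ n i * σ n (i + 1) * σ n i = σ n (i + 1) * σ n i * σ n (i + 1) := by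
  rw [show σ n i = PresentedGroup.of (⟨i - 1, by omega⟩ : Fin (n - 1)) from
      dif_pos ⟨h1, by omega⟩,
    show σ n (i + 1) = PresentedGroup.of (⟨i + 1 - 1, by omega⟩ : Fin (n - 1)) from
      dif_pos ⟨by omega, h2⟩]
  have key : (⟨i + 1 - 1, by omega⟩ : Fin (n - 1)) = ⟨(i - 1) + 1, by omega⟩ := by
    rw [Fin.mk.injEq]; omega
  rw [key]
  have hmem : (FreeGroup.of (⟨i - 1, by omega⟩ : Fin (n-1)) * .of ⟨(i-1) + 1, by omega⟩ *
      .of ⟨i - 1, by omega⟩ *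
      (.of ⟨(i-1) + 1, by omega⟩ * .of ⟨i - 1, by omega⟩ * .of ⟨(i-1)+1, by omega⟩)⁻¹)
      ∈ braidRels (n - 1) :=
    Or.inr ⟨⟨i - 1, by omega⟩, by show i - 1 + 1 < n - 1; omega, rfl⟩
  have h := mk_rel_eq_one hmem
  rw [map_mul, map_inv, mul_inv_eq_one, map_mul, map_mul, map_mul, map_mul] at h
  exact h

/-- The canonical homomorphism `ι : B_{n-1} → B_n` determined by `σ_i ↦ σ_i`. -/
def ι (n : ℕ) : BraidGroup (n - 1) →* BraidGroup n :=
  PresentedGroup.toGroup (f := fun i : Fin (n - 1 - 1) => σ n (i.val + 1))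
    (by
      rintro r (⟨i, j, hij, rfl⟩ | ⟨i, hij, rfl⟩) <;>
        simp only [map_mul, map_inv, FreeGroup.lift_apply_of] <;> rw [mul_inv_eq_one]
      · exact σ_comm (by omega) (by omega) (by have := j.isLt; omega)
      · exact σ_braid (by omega) (by have := i.isLt; omega))


/-! ### Auxiliary lemmas for products of generators -/

private lemma σ_junk {n i : ℕ} (h : ¬ (1 ≤ i ∧ i ≤ n - 1)) : σ n i = 1 := dif_neg h

private lemma up_empty {n a b : ℕ} (h : b < a) : up n a b = 1 := by
  unfold up; rw [show b + 1 - a = 0 by omega]; simp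

private lemma down_empty {n a b : ℕ} (h : a < b) : down n a b = 1 := by
  unfold down; rw [show a + 1 - b = 0 by omega]; simp

private lemma up_single {n a : ℕ} : up n a a = σ n a := by
  unfold up; rw [show a + 1 - a = 1 by omega]; simp

private lemma up_concat {n a b : ℕ} (h : a ≤ b + 1) :
    up n a (b + 1) = up n a b * σ n (b + 1) := by
  unfold up
  rw [show b + 1 + 1 - a = (b + 1 - a) + 1 by omega, List.range'_1_concat,
    show a + (b + 1 - a) = b + 1 by omega, List.map_append, List.prod_append]
  simp

private lemma up_cons {n a b : ℕ} (h : a ≤ b) :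
    up n a b = σ n a * up n (a + 1) b := by
  unfold up
  rw [show b + 1 - a = (b + 1 - (a + 1)) + 1 by omega, List.range'_succ]
  simp

private lemma down_cons {n a b : ℕ} (h : b ≤ a + 1) :
    down n (a + 1) b = σ n (a + 1) * down n a b := by
  unfold down
  rw [show a + 1 + 1 - b = (a + 1 - b) + 1 by omega, List.range'_1_concat,
    show b + (a + 1 - b) = a + 1 by omega, List.reverse_append]
  simp

private lemma down_concat {n a b : ℕ} (h : b ≤ a) :
    down n a b = down n a (b + 1) * σ n b := by
  unfold down
  rw [show a + 1 - b = (a + 1 - (b + 1)) + 1 by omega, List.range'_succ,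
    List.reverse_cons, List.map_append, List.prod_append]
  simp

private lemma up_zero {n a : ℕ} : up n a 0 = 1 := by
  rcases Nat.eq_zero_or_pos a with h | h
  · subst h; rw [show up n 0 0 = σ n 0 from up_single]; exact σ_junk (by omega)
  · exact up_empty h

private lemma down_zero {n b : ℕ} : down n 0 b = 1 := by
  rcases Nat.eq_zero_or_pos b with h | h
  · subst h
    unfold down; simp [σ_junk (n := n) (i := 0) (by omega)]
  · exact down_empty h

private lemma up_append {n a c b : ℕ} (h1 : a ≤ c + 1) (h2 : c ≤ b) :
    up n a b = up n a c * up n (c + 1) b := by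
  unfold up
  have key : List.range' a (c + 1 - a) ++ List.range' (a + (c + 1 - a)) (b + 1 - (c + 1))
      = List.range' a (b + 1 - (c + 1) + (c + 1 - a)) := by
    rw [List.range'_append_1, Nat.add_comm (c + 1 - a)]
  rw [show a + (c + 1 - a) = c + 1 by omega,
    show b + 1 - (c + 1) + (c + 1 - a) = b + 1 - a by omega] at key
  rw [← key, List.map_append, List.prod_append]

private lemma down_append {n a c b : ℕ} (h1 : b ≤ c + 1) (h2 : c ≤ a) :
    down n a b = down n a (c + 1) * down n c b := by
  unfold down
  have key : List.range' b (c + 1 - b) ++ List.range' (b + (c + 1 - b)) (a + 1 - (c + 1))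
      = List.range' b (a + 1 - (c + 1) + (c + 1 - b)) := by
    rw [List.range'_append_1, Nat.add_comm (c + 1 - b)]
  rw [show b + (c + 1 - b) = c + 1 by omega,
    show a + 1 - (c + 1) + (c + 1 - b) = a + 1 - b by omega] at key
  rw [← key, List.reverse_append, List.map_append, List.prod_append]

/-- Commutation of a generator with another generator, allowing junk values. -/
private lemma σσ_comm {n i j : ℕ} (h2 : i + 2 ≤ j) (h3 : j ≤ n - 1) :
    σ n i * σ n j = σ n j * σ n i := by
  rcases Nat.eq_zero_or_pos i with h | h
  · subst h; rw [σ_junk (n := n) (i := 0) (by omega), one_mul, mul_one]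
  · exact σ_comm h h2 h3

private lemma σ_up_comm_right {n j a b : ℕ} (h2 : b + 2 ≤ j) (h3 : j ≤ n - 1) :
    σ n j * up n a b = up n a b * σ n j := by
  induction b with
  | zero => rw [up_zero, one_mul, mul_one]
  | succ b ih =>
    rcases le_or_gt a (b + 1) with h | h
    · rw [up_concat h, ← mul_assoc, ih (by omega), mul_assoc,
        ← σσ_comm (i := b + 1) (by omega) h3, ← mul_assoc]
    · rw [up_empty h, one_mul, mul_one]

private lemma σ_up_comm_left {n j a b : ℕ} (h2 : j + 2 ≤ a) (h3 : b ≤ n - 1) :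
    σ n j * up n a b = up n a b * σ n j := by
  induction b with
  | zero => rw [up_zero, one_mul, mul_one]
  | succ b ih =>
    rcases le_or_gt a (b + 1) with h | h
    · rw [up_concat h, ← mul_assoc, ih (by omega), mul_assoc,
        σσ_comm (i := j) (by omega) (by omega), ← mul_assoc]
    · rw [up_empty h, one_mul, mul_one]

private lemma σ_down_comm_right {n j a b : ℕ} (h2 : a + 2 ≤ j) (h3 : j ≤ n - 1) :
    σ n j * down n a b = down n a b * σ n j := by
  induction a with
  | zero => rw [down_zero, one_mul, mul_one]
  | succ a ih =>
    rcases le_or_gt b (a + 1) with h | h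
    · rw [down_cons h, ← mul_assoc, ← σσ_comm (i := a + 1) (by omega) h3, mul_assoc,
        ih (by omega), ← mul_assoc]
    · rw [down_empty h, one_mul, mul_one]

private lemma σ_down_comm_left {n j a b : ℕ} (h2 : j + 2 ≤ b) (h3 : a ≤ n - 1) :
    σ n j * down n a b = down n a b * σ n j := by
  induction a with
  | zero => rw [down_zero, one_mul, mul_one]
  | succ a ih =>
    rcases le_or_gt b (a + 1) with h | h
    · rw [down_cons h, ← mul_assoc, σσ_comm (i := j) (by omega) (by omega), mul_assoc,
        ih (by omega), ← mul_assoc]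
    · rw [down_empty h, one_mul, mul_one]


private lemma mul_swap' {G : Type*} [Group G] {x y y' x' : G} (h : x * y = y' * x') (t : G) :
    x * (y * t) = y' * (x' * t) := by rw [← mul_assoc, h, mul_assoc]

private lemma mul3_swap {G : Type*} [Group G] {x y z w : G} (h : x * y * z = w * (x * y))
    (t : G) : x * (y * (z * t)) = w * (x * (y * t)) := by
  have h2 := congrArg (· * t) h
  simpa only [mul_assoc] using h2

private lemma braid_assoc {n j : ℕ} (h1 : 1 ≤ j) (h2 : j + 1 ≤ n - 1) (t : BraidGroup n) :
    σ n j * (σ n (j + 1) * (σ n j * t)) = σ n (j + 1) * (σ n j * (σ n (j + 1) * t)) := by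
  rw [← mul_assoc, ← mul_assoc, σ_braid h1 h2]
  simp only [mul_assoc]

/-- The fundamental shift relation `(σ_a ⋯ σ_m) σ_j = σ_{j+1} (σ_a ⋯ σ_m)` for `a ≤ j < m`. -/
private lemma shift_up {n : ℕ} : ∀ (d : ℕ) {a j m : ℕ}, j = a + d → 1 ≤ a → j + 1 ≤ m →
    m ≤ n - 1 → up n a m * σ n j = σ n (j + 1) * up n a m := by
  intro d
  induction d with
  | zero =>
    intro a j m hd ha hjm hm
    obtain rfl : a = j := by omega
    rw [up_cons (show a ≤ m by omega), up_cons (show a + 1 ≤ m by omega)]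
    simp only [mul_assoc]
    rw [← σ_up_comm_left (show a + 2 ≤ a + 2 by omega) hm,
      braid_assoc (by omega) (by omega)]
  | succ d ih =>
    intro a j m hd ha hjm hm
    rw [up_cons (show a ≤ m by omega)]
    simp only [mul_assoc]
    rw [ih (show j = (a + 1) + d by omega) (by omega) hjm hm,
      mul_swap' (σσ_comm (i := a) (j := j + 1) (by omega) (by omega))]

private lemma shift_down {n : ℕ} : ∀ (d : ℕ) {b j m : ℕ}, j = b + d → 1 ≤ b → j + 1 ≤ m →
    m ≤ n - 1 → σ n j * down n m b = down n m b * σ n (j + 1) := by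
  intro d
  induction d with
  | zero =>
    intro b j m hd hb hjm hm
    obtain rfl : b = j := by omega
    rw [down_concat (show b ≤ m by omega), down_concat (show b + 1 ≤ m by omega)]
    simp only [mul_assoc]
    rw [mul_swap' (σ_down_comm_left (show b + 2 ≤ b + 2 by omega) hm)]
    congr 1
    rw [← mul_assoc, σ_braid (by omega) (by omega)]
    simp only [mul_assoc]
  | succ d ih =>
    intro b j m hd hb hjm hm
    rw [down_concat (show b ≤ m by omega)]
    simp only [mul_assoc]
    rw [← mul_assoc, ih (show j = (b + 1) + d by omega) (by omega) hjm hm, mul_assoc,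
      σσ_comm (i := b) (j := j + 1) (by omega) (by omega)]

/-- Shifted product relation: `u · (σ_1 ⋯ σ_d) = (σ_2 ⋯ σ_{d+1}) · u`. -/
private lemma shift_up_prod {n : ℕ} (hn : 2 ≤ n) :
    ∀ (d : ℕ), d ≤ n - 2 →
      up n 1 (n - 1) * up n 1 d = up n 2 (d + 1) * up n 1 (n - 1) := by
  intro d
  induction d with
  | zero => intro _; rw [up_zero, mul_one, up_empty (show (0:ℕ) + 1 < 2 by omega), one_mul]
  | succ d ih =>
    intro hd
    rw [up_concat (show 1 ≤ d + 1 by omega), ← mul_assoc, ih (by omega), mul_assoc,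
      shift_up d (show d + 1 = 1 + d by omega) (by omega) (show d + 1 + 1 ≤ n - 1 by omega)
        le_rfl, ← mul_assoc, ← up_concat (show 2 ≤ d + 1 + 1 by omega)]

/-- The key relation `u² σ_{n-1} = σ_1 u²` where `u = σ_1 ⋯ σ_{n-1}`. -/
private lemma u_sq_top {n : ℕ} (hn : 2 ≤ n) :
    up n 1 (n - 1) * up n 1 (n - 1) * σ n (n - 1)
      = σ n 1 * (up n 1 (n - 1) * up n 1 (n - 1)) := by
  have e1 : up n 1 (n - 1) = up n 1 (n - 2) * σ n (n - 1) := by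
    have h := up_concat (n := n) (a := 1) (b := n - 2) (by omega)
    rwa [show n - 2 + 1 = n - 1 by omega] at h
  have sp : up n 1 (n - 1) * up n 1 (n - 2) = up n 2 (n - 1) * up n 1 (n - 1) := by
    have h := shift_up_prod hn (n - 2) le_rfl
    rwa [show n - 2 + 1 = n - 1 by omega] at h
  have key : up n 1 (n - 1) * up n 1 (n - 1)
      = up n 2 (n - 1) * (up n 1 (n - 1) * σ n (n - 1)) := by
    nth_rewrite 2 [e1]
    rw [← mul_assoc, sp, mul_assoc]
  have uc : up n 1 (n - 1) = σ n 1 * up n 2 (n - 1) := by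
    have h := up_cons (n := n) (a := 1) (b := n - 1) (by omega)
    rwa [show (1 : ℕ) + 1 = 2 from rfl] at h
  conv_rhs => rw [key]
  rw [← mul_assoc, ← uc, mul_assoc]

private lemma pow_shift {n : ℕ} : ∀ (m : ℕ) {i : ℕ}, 1 ≤ i → i + m ≤ n - 1 →
    up n 1 (n - 1) ^ m * σ n i = σ n (i + m) * up n 1 (n - 1) ^ m := by
  intro m
  induction m with
  | zero => intro i h1 h2; simp
  | succ m ih =>
    intro i h1 h2
    rw [show i + (m + 1) = i + 1 + m by omega, pow_succ]
    simp only [mul_assoc]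
    rw [shift_up (i - 1) (show i = 1 + (i - 1) by omega) le_rfl (by omega) le_rfl,
      mul_swap' (ih (by omega) (by omega))]

/-- `u^n` commutes with every generator. -/
private lemma u_pow_comm_σ {n : ℕ} (hn : 2 ≤ n) (i : ℕ) :
    up n 1 (n - 1) ^ n * σ n i = σ n i * up n 1 (n - 1) ^ n := by
  by_cases hi : 1 ≤ i ∧ i ≤ n - 1
  · obtain ⟨h1, h2⟩ := hi
    have decomp : up n 1 (n - 1) ^ n
        = up n 1 (n - 1) ^ (i - 1) * (up n 1 (n - 1) * up n 1 (n - 1))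
            * up n 1 (n - 1) ^ (n - 1 - i) := by
      rw [← pow_two, ← pow_add, ← pow_add, show i - 1 + 2 + (n - 1 - i) = n by omega]
    have st1 : up n 1 (n - 1) ^ (n - 1 - i) * σ n i
        = σ n (n - 1) * up n 1 (n - 1) ^ (n - 1 - i) := by
      have h := pow_shift (n := n) (n - 1 - i) (i := i) h1 (by omega)
      rwa [show i + (n - 1 - i) = n - 1 by omega] at h
    have st2 : up n 1 (n - 1) ^ (i - 1) * σ n 1
        = σ n i * up n 1 (n - 1) ^ (i - 1) := by
      have h := pow_shift (n := n) (i - 1) (i := 1) le_rfl (by omega)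
      rwa [show 1 + (i - 1) = i by omega] at h
    rw [decomp]
    simp only [mul_assoc]
    rw [st1, mul3_swap (u_sq_top hn), mul_swap' st2]
  · rw [σ_junk hi, mul_one, one_mul]

private lemma u_pow_comm_up {n : ℕ} (hn : 2 ≤ n) (a b : ℕ) :
    up n 1 (n - 1) ^ n * up n a b = up n a b * up n 1 (n - 1) ^ n := by
  induction b with
  | zero => rw [up_zero, mul_one, one_mul]
  | succ b ih =>
    rcases le_or_gt a (b + 1) with h | h
    · rw [up_concat h, ← mul_assoc, ih, mul_assoc, u_pow_comm_σ hn, ← mul_assoc]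
    · rw [up_empty h, mul_one, one_mul]

/-- The half twist `Δ_k = (σ_1 ⋯ σ_{k-1})(σ_1 ⋯ σ_{k-2}) ⋯ (σ_1)`. -/
private def Del (n : ℕ) : ℕ → BraidGroup n
  | 0 => 1
  | k + 1 => up n 1 k * Del n k

private lemma σ_Del_comm {n : ℕ} : ∀ (k : ℕ) {j : ℕ}, k + 1 ≤ j → j ≤ n - 1 →
    σ n j * Del n k = Del n k * σ n j := by
  intro k
  induction k with
  | zero => intro j _ _; rw [show Del n 0 = 1 from rfl, mul_one, one_mul]
  | succ k ih =>
    intro j h1 h2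
    rw [show Del n (k + 1) = up n 1 k * Del n k from rfl, ← mul_assoc,
      σ_up_comm_right (by omega) h2, mul_assoc, ih (by omega) h2, ← mul_assoc]

private lemma u_pow_comm_Del {n : ℕ} (hn : 2 ≤ n) (k : ℕ) :
    up n 1 (n - 1) ^ n * Del n k = Del n k * up n 1 (n - 1) ^ n := by
  induction k with
  | zero => rw [show Del n 0 = 1 from rfl, mul_one, one_mul]
  | succ k ih =>
    rw [show Del n (k + 1) = up n 1 k * Del n k from rfl, ← mul_assoc,
      u_pow_comm_up hn, mul_assoc, ih, ← mul_assoc]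

/-- The second decomposition `Δ_{k+1} = Δ_k (σ_k ⋯ σ_1)`. -/
private lemma Del_down {n : ℕ} : ∀ (k : ℕ), k ≤ n - 1 →
    Del n (k + 1) = Del n k * down n k 1 := by
  intro k
  induction k using Nat.strong_induction_on with
  | _ k ih =>
    match k with
    | 0 => intro _; simp [Del, up_zero, down_empty]
    | 1 =>
      intro _
      show up n 1 1 * Del n 1 = Del n 1 * down n 1 1
      have h : down n 1 1 = σ n 1 * down n 0 1 := down_cons (by omega)
      rw [h, down_zero, mul_one, up_single]
      show σ n 1 * Del n 1 = Del n 1 * σ n 1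
      simp [Del, up_zero]
    | (k + 2) =>
      intro hk
      have e2 : Del n (k + 2) = Del n (k + 1) * down n (k + 1) 1 :=
        ih (k + 1) (by omega) (by omega)
      have e3 : Del n (k + 2) = up n 1 (k + 1) * Del n (k + 1) := rfl
      have uc : up n 1 (k + 2) = up n 1 (k + 1) * σ n (k + 2) := up_concat (by omega)
      have dc : down n (k + 2) 1 = σ n (k + 2) * down n (k + 1) 1 := down_cons (by omega)
      show up n 1 (k + 2) * Del n (k + 2) = Del n (k + 2) * down n (k + 2) 1
      rw [uc, dc]
      conv_lhs => rw [e2]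
      conv_rhs => rw [e3]
      simp only [mul_assoc]
      rw [mul_swap' (σ_Del_comm (k + 1) (j := k + 2) (by omega) (by omega))]

/-- The reversing property of the half twist: `Δ_k σ_i = σ_{k-i} Δ_k`. -/
private lemma Del_σ {n : ℕ} : ∀ (k : ℕ), k ≤ n → ∀ {i : ℕ}, 1 ≤ i → i + 1 ≤ k →
    Del n k * σ n i = σ n (k - i) * Del n k := by
  intro k
  induction k with
  | zero => intro _ i _ h; omega
  | succ k ih =>
    intro hk i h1 hik
    rcases Nat.lt_or_ge k 2 with hk2 | hk2
    · obtain ⟨rfl, rfl⟩ : k = 1 ∧ i = 1 := by omega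
      show Del n 2 * σ n 1 = σ n 1 * Del n 2
      have : Del n 2 = σ n 1 := by simp [Del, up_zero, up_single]
      rw [this]
    · rcases eq_or_lt_of_le h1 with hi1 | hi2
      · -- i = 1
        rw [← hi1, show Del n (k + 1) = up n 1 k * Del n k from rfl,
          show k + 1 - 1 = k by omega, mul_assoc, ih (by omega) le_rfl (by omega)]
        have hsu := shift_up (k - 2) (show k - 1 = 1 + (k - 2) by omega) le_rfl
          (show k - 1 + 1 ≤ k by omega) (show k ≤ n - 1 by omega)
        rw [show k - 1 + 1 = k by omega] at hsu
        rw [← mul_assoc, hsu, mul_assoc]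
      · -- 2 ≤ i
        rw [Del_down k (by omega), show k + 1 - i = k - (i - 1) by omega]
        have hs : σ n (i - 1) * down n k 1 = down n k 1 * σ n i := by
          have h := shift_down (i - 2) (show i - 1 = 1 + (i - 2) by omega) le_rfl
            (show i - 1 + 1 ≤ k by omega) (show k ≤ n - 1 by omega)
          rwa [show i - 1 + 1 = i by omega] at h
        rw [mul_assoc, ← hs, ← mul_assoc, ih (by omega) (by omega) (by omega), mul_assoc]

/-- Conjugation by the half twist turns ascending products into descending ones. -/
private lemma Del_up {n : ℕ} (hn : 2 ≤ n) : ∀ (b : ℕ) {a : ℕ}, 1 ≤ a → b ≤ n - 1 →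
    Del n n * up n a b = down n (n - a) (n - b) * Del n n := by
  intro b
  induction b with
  | zero =>
    intro a ha _
    rw [up_zero, mul_one, down_empty (show n - a < n - 0 by omega), one_mul]
  | succ b ih =>
    intro a ha hb
    rcases le_or_gt a (b + 1) with h | h
    · rw [up_concat h, ← mul_assoc, ih ha (by omega), mul_assoc,
        Del_σ n le_rfl (by omega) (show b + 1 + 1 ≤ n by omega), ← mul_assoc]
      have dc := down_concat (n := n) (a := n - a) (b := n - (b + 1))
        (show n - (b + 1) ≤ n - a by omega)
      rw [show n - (b + 1) + 1 = n - b by omega] at dc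
      rw [← dc]
    · rw [up_empty h, mul_one, down_empty (show n - a < n - (b + 1) by omega), one_mul]

/-- The crucial identity `u^n = δ^n` (both equal the full twist). -/
private lemma u_pow_eq_delta_pow {n : ℕ} (hn : 2 ≤ n) :
    up n 1 (n - 1) ^ n = down n (n - 1) 1 ^ n := by
  have hDu : Del n n * up n 1 (n - 1) = down n (n - 1) 1 * Del n n := by
    have h := Del_up hn (n - 1) (a := 1) le_rfl le_rfl
    rwa [show n - 1 = n - 1 from rfl, show n - (n - 1) = 1 by omega] at h
  have hpow : ∀ k : ℕ, down n (n - 1) 1 ^ k * Del n n = Del n n * up n 1 (n - 1) ^ k := by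
    intro k
    induction k with
    | zero => rw [pow_zero, pow_zero, mul_one, one_mul]
    | succ k ih => rw [pow_succ, mul_assoc, ← hDu, ← mul_assoc, ih, mul_assoc, ← pow_succ]
  have h1 := hpow n
  rw [← u_pow_comm_Del hn n] at h1
  exact (mul_right_cancel h1).symm


/-! ### Flips -/

private lemma shift_up_down {n : ℕ} : ∀ (e : ℕ) {f : ℕ}, 1 ≤ f → e ≤ n - 2 →
    up n 1 (n - 1) * down n e f = down n (e + 1) (f + 1) * up n 1 (n - 1) := by
  intro e
  induction e with
  | zero =>
    intro f hf _
    rw [down_zero, mul_one, down_empty (show (1 : ℕ) < f + 1 by omega), one_mul]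
  | succ e ih =>
    intro f hf he
    rcases le_or_gt f (e + 1) with h | h
    · rw [down_cons h, ← mul_assoc,
        shift_up (n := n) e (show e + 1 = 1 + e by omega) le_rfl
          (show e + 1 + 1 ≤ n - 1 by omega) le_rfl,
        mul_assoc, ih hf (by omega), ← mul_assoc,
        ← down_cons (show f + 1 ≤ e + 1 + 1 by omega)]
    · rw [down_empty h, mul_one, down_empty (show e + 1 + 1 < f + 1 by omega), one_mul]

private lemma flip_top {n : ℕ} (hn : 2 ≤ n) :
    flip n n = down n (n - 1) 1 * up n 1 (n - 1) := by
  unfold flip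
  rw [down_empty (show n - 1 < n by omega), mul_one]

private lemma flip_one {n : ℕ} (hn : 2 ≤ n) :
    flip n 1 = up n 1 (n - 1) * down n (n - 1) 1 := by
  unfold flip
  rw [show (1 : ℕ) - 1 = 0 from rfl, down_zero, one_mul]

/-- Conjugating a flip by `u` cycles its index: `u r_i = r_{i+1} u` for `1 ≤ i ≤ n-1`. -/
private lemma flip_shift {n : ℕ} (hn : 2 ≤ n) {i : ℕ} (h1 : 1 ≤ i) (h2 : i ≤ n - 1) :
    up n 1 (n - 1) * flip n i = flip n (i + 1) * up n 1 (n - 1) := by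
  have s1 : up n 1 (n - 1) * down n (i - 1) 1 = down n i 2 * up n 1 (n - 1) := by
    have h := shift_up_down (n := n) (i - 1) (f := 1) le_rfl (by omega)
    rwa [show i - 1 + 1 = i by omega, show (1 : ℕ) + 1 = 2 from rfl] at h
  have s2 : up n 1 (n - 1) * down n (n - 2) i
      = down n (n - 1) (i + 1) * up n 1 (n - 1) := by
    have h := shift_up_down (n := n) (n - 2) (f := i) h1 le_rfl
    rwa [show n - 2 + 1 = n - 1 by omega] at h
  have dc : down n (n - 1) i = σ n (n - 1) * down n (n - 2) i := by
    have h := down_cons (n := n) (a := n - 2) (b := i) (show i ≤ n - 2 + 1 by omega)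
    rwa [show n - 2 + 1 = n - 1 by omega] at h
  have dc2 : down n i 1 = down n i 2 * σ n 1 := by
    have h := down_concat (n := n) (a := i) (b := 1) h1
    rwa [show (1 : ℕ) + 1 = 2 from rfl] at h
  unfold flip
  rw [show i + 1 - 1 = i by omega, dc, dc2]
  simp only [mul_assoc]
  rw [mul_swap' s1, mul3_swap (u_sq_top hn), s2]

private lemma flip_top_shift {n : ℕ} (hn : 2 ≤ n) :
    up n 1 (n - 1) * flip n n = flip n 1 * up n 1 (n - 1) := by
  rw [flip_top hn, flip_one hn, ← mul_assoc]

private lemma flipsDown_empty {n a b : ℕ} (h : a < b) : flipsDown n a b = 1 := by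
  unfold flipsDown; rw [show a + 1 - b = 0 by omega]; simp

private lemma flipsDown_cons {n a b : ℕ} (h : b ≤ a + 1) :
    flipsDown n (a + 1) b = flip n (a + 1) * flipsDown n a b := by
  unfold flipsDown
  rw [show a + 1 + 1 - b = (a + 1 - b) + 1 by omega, List.range'_1_concat,
    show b + (a + 1 - b) = a + 1 by omega, List.reverse_append]
  simp

private lemma flipsDown_concat {n a b : ℕ} (h : b ≤ a) :
    flipsDown n a b = flipsDown n a (b + 1) * flip n b := by
  unfold flipsDown
  rw [show a + 1 - b = (a + 1 - (b + 1)) + 1 by omega, List.range'_succ,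
    List.reverse_cons, List.map_append, List.prod_append]
  simp

private lemma u_flip_pow {n : ℕ} (hn : 2 ≤ n) : ∀ (j : ℕ), j ≤ n - 1 →
    up n 1 (n - 1) ^ j * flip n 1 = flip n (j + 1) * up n 1 (n - 1) ^ j := by
  intro j
  induction j with
  | zero => intro _; rw [pow_zero, one_mul, mul_one]
  | succ j ih =>
    intro hj
    rw [pow_succ']
    simp only [mul_assoc]
    rw [ih (by omega), ← mul_assoc, flip_shift hn (by omega) (by omega), mul_assoc]

private lemma u_flipsDown {n : ℕ} (hn : 2 ≤ n) : ∀ (a : ℕ) {b : ℕ}, 1 ≤ b → a ≤ n - 1 →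
    up n 1 (n - 1) * flipsDown n a b
      = flipsDown n (a + 1) (b + 1) * up n 1 (n - 1) := by
  intro a
  induction a with
  | zero =>
    intro b hb _
    rw [flipsDown_empty (show (0 : ℕ) < b by omega), mul_one,
      flipsDown_empty (show (1 : ℕ) < b + 1 by omega), one_mul]
  | succ a ih =>
    intro b hb ha
    rcases le_or_gt b (a + 1) with h | h
    · rw [flipsDown_cons h, ← mul_assoc, flip_shift hn (by omega) (by omega), mul_assoc,
        ih hb (by omega), ← mul_assoc, ← flipsDown_cons (show b + 1 ≤ a + 1 + 1 by omega)]
    · rw [flipsDown_empty h, mul_one,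
        flipsDown_empty (show a + 1 + 1 < b + 1 by omega), one_mul]

/-- The telescoped product of flips: `r_j r_{j-1} ⋯ r_1 = u^j δ^j`. -/
private lemma flipsDown_eq {n : ℕ} (hn : 2 ≤ n) : ∀ (j : ℕ), 1 ≤ j → j ≤ n →
    flipsDown n j 1 = up n 1 (n - 1) ^ j * down n (n - 1) 1 ^ j := by
  intro j
  induction j with
  | zero => intro h1 _; exact absurd h1 (by omega)
  | succ j ih =>
    intro h1 hj
    rcases Nat.eq_zero_or_pos j with rfl | hjpos
    · have e : flipsDown n 1 1 = flip n 1 * flipsDown n 0 1 := flipsDown_cons le_rfl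
      rw [e, flipsDown_empty (show (0 : ℕ) < 1 by omega), mul_one, flip_one hn,
        pow_one, pow_one]
    · have e : flipsDown n (j + 1) 1 = flip n (j + 1) * flipsDown n j 1 :=
        flipsDown_cons (by omega)
      rw [e, ih (by omega) (by omega), ← mul_assoc, ← u_flip_pow hn j (by omega),
        flip_one hn]
      simp only [mul_assoc]
      rw [← pow_succ', ← mul_assoc, ← pow_succ]


/-- `r_n r_{n-1} ⋯ r_2 r_1 = d^2`, and every cyclic rotation of this product also equals `d^2`:
for `1 ≤ k ≤ n`, `(r_k r_{k-1} ⋯ r_1) (r_n r_{n-1} ⋯ r_{k+1}) = d^2`. -/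
theorem flips_prod_eq_fullTwist_sq (n : ℕ) (hn : 2 ≤ n) :
    flipsDown n n 1 = fullTwist n ^ 2 ∧
    ∀ k : ℕ, 1 ≤ k → k ≤ n →
      flipsDown n k 1 * flipsDown n n (k + 1) = fullTwist n ^ 2 := by
  have hud := u_pow_eq_delta_pow (n := n) hn
  have hQ : flipsDown n n 1 = fullTwist n ^ 2 := by
    rw [flipsDown_eq hn n (by omega) le_rfl, hud, ← pow_two]
    rfl
  refine ⟨hQ, ?_⟩
  have hTu : up n 1 (n - 1) * fullTwist n ^ 2 = fullTwist n ^ 2 * up n 1 (n - 1) := by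
    show up n 1 (n - 1) * (down n (n - 1) 1 ^ n) ^ 2
      = (down n (n - 1) 1 ^ n) ^ 2 * up n 1 (n - 1)
    rw [← hud, ← pow_mul, ← pow_succ', ← pow_succ]
  have hstep : ∀ k, 1 ≤ k → k ≤ n - 1 →
      up n 1 (n - 1) * (flipsDown n k 1 * flipsDown n n (k + 1))
        = (flipsDown n (k + 1) 1 * flipsDown n n (k + 2)) * up n 1 (n - 1) := by
    intro k hk1 hk2
    have e0 : up n 1 (n - 1) * flipsDown n k 1
        = flipsDown n (k + 1) 2 * up n 1 (n - 1) := by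
      have h := u_flipsDown hn k (b := 1) le_rfl hk2
      rwa [show (1 : ℕ) + 1 = 2 from rfl] at h
    have e1 : flipsDown n n (k + 1) = flip n n * flipsDown n (n - 1) (k + 1) := by
      have h := flipsDown_cons (n := n) (a := n - 1) (b := k + 1) (by omega)
      rwa [show n - 1 + 1 = n by omega] at h
    have e2 : up n 1 (n - 1) * flipsDown n (n - 1) (k + 1)
        = flipsDown n n (k + 2) * up n 1 (n - 1) := by
      have h := u_flipsDown hn (n - 1) (b := k + 1) (by omega) le_rfl
      rwa [show n - 1 + 1 = n by omega] at h
    have e3 : flipsDown n (k + 1) 2 * flip n 1 = flipsDown n (k + 1) 1 := by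
      have h := flipsDown_concat (n := n) (a := k + 1) (b := 1) (by omega)
      rw [show (1 : ℕ) + 1 = 2 from rfl] at h
      exact h.symm
    rw [e1, ← e3]
    simp only [mul_assoc]
    rw [mul_swap' e0, mul_swap' (flip_top_shift hn), e2]
  have hdown : ∀ t, t ≤ n - 1 →
      flipsDown n (n - t) 1 * flipsDown n n (n - t + 1) = fullTwist n ^ 2 := by
    intro t
    induction t with
    | zero =>
      intro _
      rw [show n - 0 = n from rfl, flipsDown_empty (show n < n + 1 by omega), mul_one, hQ]
    | succ t ih =>
      intro ht
      have heq : n - (t + 1) + 1 = n - t := by omega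
      have heq2 : n - (t + 1) + 2 = n - t + 1 := by omega
      have h := hstep (n - (t + 1)) (by omega) (by omega)
      rw [heq, heq2, ih (by omega)] at h
      rw [heq]
      exact mul_left_cancel (h.trans hTu.symm)
  intro k hk1 hkn
  rcases eq_or_lt_of_le hkn with rfl | hlt
  · rw [flipsDown_empty (show k < k + 1 by omega), mul_one]
    exact hQ
  · have h := hdown (n - k) (by omega)
    rw [show n - (n - k) = k by omega] at h
    exact h


end Braid
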